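/- arXiv:1202.2460 — 3 statements merged into one kernel-verified Lean document; each statement's English description precedes it below -/
import Mathlib

section
/- Let X be a finite set with |X| ≥ 2 and let C be a cluster system for X that contains a maximal hierarchy H on X. Then C* ⊆ H; in particular, the adjoint C* of C is a hierarchy. -/
/-! Since `H ⊆ C` and the adjoint is antitone, `C* ⊆ H*`. Every member of `H*` is a non-empty
set compatible with all of `H`; adding it to `H` keeps a hierarchy, so by maximality it already
lies in `H`. Subsets of hierarchies are hierarchies. -/

/-- Two subsets `A`, `B` are compatible if `A ∩ B ∈ {∅, A, B}`. -/
def Compatible {α : Type*} [DecidableEq α] (A B : Finset α) : Prop :=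
  A ∩ B = ∅ ∨ A ∩ B = A ∨ A ∩ B = B

/-- A cluster system: a collection of non-empty subsets of `X`. -/
def IsCS {α : Type*} [DecidableEq α] (C : Set (Finset α)) : Prop :=
  ∀ A ∈ C, A.Nonempty

/-- The adjoint `C*`: all non-empty subsets of `X` compatible with every member of `C`. -/
def adjS {α : Type*} [DecidableEq α] (C : Set (Finset α)) : Set (Finset α) :=
  {A | A.Nonempty ∧ ∀ B ∈ C, Compatible A B}

/-- A hierarchy: a cluster system whose members are pairwise compatible. -/
def IsHierarchyS {α : Type*} [DecidableEq α] (C : Set (Finset α)) : Prop :=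
  IsCS C ∧ ∀ A ∈ C, ∀ B ∈ C, Compatible A B

/-- A maximal hierarchy: a hierarchy not properly contained in any other hierarchy. -/
def IsMaxHierarchyS {α : Type*} [DecidableEq α] (H : Set (Finset α)) : Prop :=
  IsHierarchyS H ∧ ∀ D : Set (Finset α), IsHierarchyS D → H ⊆ D → D = H

/-- A weak patchwork: incompatible members have their union in the system. -/
def IsWeakPW {α : Type*} [DecidableEq α] (C : Set (Finset α)) : Prop :=
  ∀ A ∈ C, ∀ B ∈ C, ¬Compatible A B → A ∪ B ∈ C

/-- A patchwork: incompatible members have both intersection and union in the system. -/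
def IsPW {α : Type*} [DecidableEq α] (C : Set (Finset α)) : Prop :=
  ∀ A ∈ C, ∀ B ∈ C, ¬Compatible A B → A ∩ B ∈ C ∧ A ∪ B ∈ C

/-- A saturated patchwork: for incompatible members `A`, `B`, the five sets
`A ∩ B`, `A ∪ B`, `A - B`, `B - A`, `(A ∪ B) - (A ∩ B)` lie in the system. -/
def IsSatPW {α : Type*} [DecidableEq α] (C : Set (Finset α)) : Prop :=
  ∀ A ∈ C, ∀ B ∈ C, ¬Compatible A B →
    A ∩ B ∈ C ∧ A ∪ B ∈ C ∧ A \ B ∈ C ∧ B \ A ∈ C ∧ (A ∪ B) \ (A ∩ B) ∈ C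

/-- The trivial cluster system: all singletons together with `X` itself. -/
def CtrivS (α : Type*) [Fintype α] [DecidableEq α] : Set (Finset α) :=
  {A | (∃ x : α, A = {x}) ∨ A = Finset.univ}

/-- `C` is ample: for every arc `(C₂, C₁)` of the Hasse diagram (i.e. `C₂ ⊊ C₁`
with nothing of `C` strictly between), `C₁ - C₂ ∈ C`. -/
def IsAmpleS {α : Type*} [DecidableEq α] (C : Set (Finset α)) : Prop :=
  ∀ C₁ ∈ C, ∀ C₂ ∈ C, C₂ ⊂ C₁ → (∀ B ∈ C, ¬(C₂ ⊂ B ∧ B ⊂ C₁)) → C₁ \ C₂ ∈ C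

section Adjoint

variable {α : Type*} [DecidableEq α]

theorem Compatible.symm {A B : Finset α} (h : Compatible A B) : Compatible B A := by
  unfold Compatible at h ⊢
  rw [Finset.inter_comm B A]
  tauto

theorem compatible_self (A : Finset α) : Compatible A A :=
  Or.inr (Or.inl (Finset.inter_self A))

theorem adjS_anti {C D : Set (Finset α)} (hCD : C ⊆ D) : adjS D ⊆ adjS C :=
  fun _ ⟨hne, hcomp⟩ => ⟨hne, fun B hB => hcomp B (hCD hB)⟩

theorem IsHierarchyS.mono {C D : Set (Finset α)} (hD : IsHierarchyS D) (hCD : C ⊆ D) :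
    IsHierarchyS C :=
  ⟨fun A hA => hD.1 A (hCD hA), fun A hA B hB => hD.2 A (hCD hA) B (hCD hB)⟩

theorem IsHierarchyS.insert {H : Set (Finset α)} (hH : IsHierarchyS H) {A : Finset α}
    (hA : A ∈ adjS H) : IsHierarchyS (insert A H) := by
  refine ⟨?_, ?_⟩
  · rintro B (rfl | hB)
    exacts [hA.1, hH.1 B hB]
  · rintro B (rfl | hB) B' (rfl | hB')
    · exact compatible_self _
    · exact hA.2 B' hB'
    · exact (hA.2 B hB).symm
    · exact hH.2 B hB B' hB'

theorem IsMaxHierarchyS.adjS_subset {H : Set (Finset α)} (hH : IsMaxHierarchyS H) :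
    adjS H ⊆ H := by
  intro A hA
  rw [← hH.2 _ (hH.1.insert hA) (Set.subset_insert A H)]
  exact Set.mem_insert A H

end Adjoint

theorem stmt1_general {α : Type*} [DecidableEq α]
    (C H : Set (Finset α)) (hH : IsMaxHierarchyS H) (hHC : H ⊆ C) :
    adjS C ⊆ H ∧ IsHierarchyS (adjS C) := by
  have hsub : adjS C ⊆ H := (adjS_anti hHC).trans hH.adjS_subset
  exact ⟨hsub, hH.1.mono hsub⟩

/-- If a cluster system `C` contains a maximal hierarchy `H`, then `C* ⊆ H`;
in particular `C*` is a hierarchy. -/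
theorem stmt1 {α : Type*} [Fintype α] [DecidableEq α] (hcard : 2 ≤ Fintype.card α)
    (C H : Set (Finset α)) (hC : IsCS C) (hH : IsMaxHierarchyS H) (hHC : H ⊆ C) :
    adjS C ⊆ H ∧ IsHierarchyS (adjS C) :=
  stmt1_general C H hH hHC
end

section
/- Let X be a finite set with |X| ≥ 2, let C be a cluster system for X, and let R be any subset of the set of ordered pairs of non-empty subsets of X. Then the two cluster systems C*(R_∥, disj) and C*(R_disj, disj) are patchworks. -/
/-- `R_disj`: the union of `R` with all disjoint pairs. -/
def Rdisj {α : Type*} [DecidableEq α] (R : Set (Finset α × Finset α)) :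
    Set (Finset α × Finset α) :=
  R ∪ {p | p.1 ∩ p.2 = ∅}

/-- `R_∥`: the union of `R` with all compatible pairs. -/
def Rpar {α : Type*} [DecidableEq α] (R : Set (Finset α × Finset α)) :
    Set (Finset α × Finset α) :=
  R ∪ {p | Compatible p.1 p.2}

/-- `C*(R, disj)`. -/
def Cdisj {α : Type*} [DecidableEq α] (C : Set (Finset α))
    (R : Set (Finset α × Finset α)) : Set (Finset α) :=
  {A ∈ adjS C | ∀ B ∈ C, ∀ B' ∈ C, B ∩ A = ∅ → B' ∩ A = ∅ → (B, B') ∈ R}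

namespace Compatible

variable {α : Type*} [DecidableEq α] {A B D : Finset α}

theorem iff_disjoint_or_subset : Compatible A B ↔ Disjoint A B ∨ A ⊆ B ∨ B ⊆ A := by
  rw [Compatible, Finset.disjoint_iff_inter_eq_empty, Finset.inter_eq_left,
    Finset.inter_eq_right]

theorem of_disjoint (h : Disjoint A B) : Compatible A B :=
  iff_disjoint_or_subset.mpr (Or.inl h)

theorem disjoint_of_not (h : ¬Compatible A B) : ¬Disjoint A B :=
  fun hd => h (of_disjoint hd)

theorem inter_left (hA : Compatible A D) (hB : Compatible B D) : Compatible (A ∩ B) D := by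
  rw [iff_disjoint_or_subset] at hA hB ⊢
  rcases hA with hA | hA | hA
  · exact Or.inl (hA.mono_left Finset.inter_subset_left)
  · exact Or.inr (Or.inl (Finset.inter_subset_left.trans hA))
  rcases hB with hB | hB | hB
  · exact Or.inl (hB.mono_left Finset.inter_subset_right)
  · exact Or.inr (Or.inl (Finset.inter_subset_right.trans hB))
  · exact Or.inr (Or.inr (Finset.subset_inter hA hB))

theorem union_left (hAB : ¬Disjoint A B) (hA : Compatible A D) (hB : Compatible B D) :
    Compatible (A ∪ B) D := by
  rw [iff_disjoint_or_subset] at hA hB ⊢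
  rcases hA with hA | hA | hA
  · rcases hB with hB | hB | hB
    · exact Or.inl (Finset.disjoint_union_left.mpr ⟨hA, hB⟩)
    · exact absurd (hA.mono_right hB) hAB
    · exact Or.inr (Or.inr (hB.trans Finset.subset_union_right))
  · rcases hB with hB | hB | hB
    · exact absurd (hB.mono_right hA).symm hAB
    · exact Or.inr (Or.inl (Finset.union_subset hA hB))
    · exact Or.inr (Or.inr (hB.trans Finset.subset_union_right))
  · exact Or.inr (Or.inr (hA.trans Finset.subset_union_left))

end Compatible

section Adjoint

variable {α : Type*} [DecidableEq α] {C : Set (Finset α)} {R : Set (Finset α × Finset α)}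
  {A B : Finset α}

theorem inter_mem_adjS (hA : A ∈ adjS C) (hB : B ∈ adjS C) (hAB : ¬Disjoint A B) :
    A ∩ B ∈ adjS C :=
  ⟨Finset.not_disjoint_iff_nonempty_inter.mp hAB,
    fun D hD => (hA.2 D hD).inter_left (hB.2 D hD)⟩

theorem union_mem_adjS (hA : A ∈ adjS C) (hB : B ∈ adjS C) (hAB : ¬Disjoint A B) :
    A ∪ B ∈ adjS C :=
  ⟨hA.1.mono Finset.subset_union_left, fun D hD => (hA.2 D hD).union_left hAB (hB.2 D hD)⟩

theorem mem_Cdisj_iff : A ∈ Cdisj C R ↔ A ∈ adjS C ∧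
    ∀ B ∈ C, ∀ B' ∈ C, Disjoint B A → Disjoint B' A → (B, B') ∈ R := by
  simp only [Cdisj, Set.mem_ofPred_eq, Finset.disjoint_iff_inter_eq_empty]

theorem union_mem_Cdisj (hA : A ∈ Cdisj C R) (hB : B ∈ adjS C) (hAB : ¬Disjoint A B) :
    A ∪ B ∈ Cdisj C R := by
  rw [mem_Cdisj_iff] at hA ⊢
  exact ⟨union_mem_adjS hA.1 hB hAB, fun B₁ h₁ B₂ h₂ e₁ e₂ =>
    hA.2 B₁ h₁ B₂ h₂ (e₁.mono_right Finset.subset_union_left)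
      (e₂.mono_right Finset.subset_union_left)⟩

theorem disjoint_or_subset_of_disjoint_inter {D : Finset α} (hD : Compatible A D)
    (hAB : ¬Disjoint A B) (hDAB : Disjoint D (A ∩ B)) : Disjoint D A ∨ D ⊆ A := by
  rcases Compatible.iff_disjoint_or_subset.mp hD with h | h | h
  · exact Or.inl h.symm
  · have hABD : Disjoint (A ∩ B) (A ∩ B) := hDAB.mono_left (Finset.inter_subset_left.trans h)
    exact absurd (Finset.disjoint_self_iff_empty _ |>.mp hABD)
      (Finset.not_disjoint_iff_nonempty_inter.mp hAB).ne_empty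
  · exact Or.inr h

theorem inter_mem_Cdisj (hR : ∀ B B', Disjoint B B' → (B, B') ∈ R)
    (hA : A ∈ Cdisj C R) (hB : B ∈ Cdisj C R) (hAB : ¬Disjoint A B) :
    A ∩ B ∈ Cdisj C R := by
  rw [mem_Cdisj_iff] at hA hB ⊢
  refine ⟨inter_mem_adjS hA.1 hB.1 hAB, fun B₁ h₁ B₂ h₂ e₁ e₂ => ?_⟩
  have sides : ∀ D ∈ C, Disjoint D (A ∩ B) → Disjoint D A ∨ (D ⊆ A ∧ Disjoint D B) := by
    intro D hD e
    refine (disjoint_or_subset_of_disjoint_inter (hA.1.2 D hD) hAB e).imp_right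
      fun hDA => ⟨hDA, ?_⟩
    exact Finset.disjoint_left.mpr fun x hxD hxB =>
      Finset.disjoint_left.mp e hxD (Finset.mem_inter.mpr ⟨hDA hxD, hxB⟩)
  -- in a mixed case one member lies inside `A` and the other misses `A`, so they are disjoint
  rcases sides B₁ h₁ e₁ with dA₁ | ⟨sA₁, dB₁⟩ <;> rcases sides B₂ h₂ e₂ with dA₂ | ⟨sA₂, dB₂⟩
  · exact hA.2 B₁ h₁ B₂ h₂ dA₁ dA₂
  · exact hR _ _ (dA₁.symm.mono_left sA₂).symm
  · exact hR _ _ (dA₂.symm.mono_left sA₁)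
  · exact hB.2 B₁ h₁ B₂ h₂ dB₁ dB₂

end Adjoint

theorem isPW_Cdisj {α : Type*} [DecidableEq α] (C : Set (Finset α))
    (R : Set (Finset α × Finset α)) (hR : ∀ B B', Disjoint B B' → (B, B') ∈ R) :
    IsPW (Cdisj C R) := fun _ hA _ hB hAB =>
  have hAB' := Compatible.disjoint_of_not hAB
  ⟨inter_mem_Cdisj hR hA hB hAB', union_mem_Cdisj hA hB.1 hAB'⟩

theorem stmt9_general {α : Type*} [DecidableEq α]
    (C : Set (Finset α)) (R : Set (Finset α × Finset α)) :
    IsPW (Cdisj C (Rpar R)) ∧ IsPW (Cdisj C (Rdisj R)) :=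
  ⟨isPW_Cdisj C _ fun _ _ h => Or.inr (Compatible.of_disjoint h),
    isPW_Cdisj C _ fun _ _ h => Or.inr (Finset.disjoint_iff_inter_eq_empty.mp h)⟩

/-- The cluster systems `C*(R_∥, disj)` and `C*(R_disj, disj)` are patchworks. -/
theorem stmt9 {α : Type*} [Fintype α] [DecidableEq α] (hcard : 2 ≤ Fintype.card α)
    (C : Set (Finset α)) (hC : IsCS C) (R : Set (Finset α × Finset α))
    (hR : ∀ p ∈ R, p.1.Nonempty ∧ p.2.Nonempty) :
    IsPW (Cdisj C (Rpar R)) ∧ IsPW (Cdisj C (Rdisj R)) :=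
  stmt9_general C R
end

section
/- Let X be a finite set with |X| ≥ 2. A cluster system C for X satisfies C = C** if and only if C is a saturated patchwork that contains C_triv. In particular: C** = C ∪ C_triv holds for every saturated patchwork C; H** = H ∪ C_triv holds for every hierarchy H on X; and H** = H holds for a hierarchy H if and only if C_triv ⊆ H. -/
lemma compat_iff {α : Type*} [DecidableEq α] (A B : Finset α) :
    Compatible A B ↔ A ∩ B = ∅ ∨ A ⊆ B ∨ B ⊆ A := by
  unfold Compatible
  rw [Finset.inter_eq_left, Finset.inter_eq_right]

lemma compat_comm {α : Type*} [DecidableEq α] {A B : Finset α} :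
    Compatible A B → Compatible B A := by
  rw [compat_iff, compat_iff, Finset.inter_comm]; tauto

lemma not_compat_iff {α : Type*} [DecidableEq α] (A B : Finset α) :
    ¬Compatible A B ↔ (A ∩ B).Nonempty ∧ ¬A ⊆ B ∧ ¬B ⊆ A := by
  rw [compat_iff, Finset.nonempty_iff_ne_empty]; tauto

lemma compat_of_subset {α : Type*} [DecidableEq α] {A B : Finset α} (h : A ⊆ B) :
    Compatible A B := by rw [compat_iff]; tauto

lemma compat_of_superset {α : Type*} [DecidableEq α] {A B : Finset α} (h : B ⊆ A) :
    Compatible A B := by rw [compat_iff]; tauto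

lemma compat_of_disj {α : Type*} [DecidableEq α] {A B : Finset α} (h : A ∩ B = ∅) :
    Compatible A B := by rw [compat_iff]; tauto

lemma mem_adjS {α : Type*} [DecidableEq α] {C : Set (Finset α)} {A : Finset α} :
    A ∈ adjS C ↔ A.Nonempty ∧ ∀ B ∈ C, Compatible A B := Iff.rfl

lemma triv_sub_adjS {α : Type*} [Fintype α] [DecidableEq α] [Nonempty α]
    (C : Set (Finset α)) : CtrivS α ⊆ adjS C := by
  rintro A (⟨x, rfl⟩ | rfl)
  · refine ⟨⟨x, Finset.mem_singleton_self x⟩, fun B _ => ?_⟩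
    by_cases hx : x ∈ B
    · exact compat_of_subset (by simpa using hx)
    · exact compat_of_disj (by ext a; simp; rintro rfl; exact hx)
  · exact ⟨Finset.univ_nonempty, fun B _ => compat_of_superset (Finset.subset_univ B)⟩

lemma sub_adj_adj {α : Type*} [DecidableEq α] {C : Set (Finset α)} (hC : IsCS C) :
    C ⊆ adjS (adjS C) :=
  fun A hA => ⟨hC A hA, fun B hB => compat_comm (hB.2 A hA)⟩


lemma sdiff_subset_symmdiff_right {α : Type*} [DecidableEq α] (A B : Finset α) :
    B \ A ⊆ (A ∪ B) \ (A ∩ B) := by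
  intro a ha
  rw [Finset.mem_sdiff] at ha
  rw [Finset.mem_sdiff, Finset.mem_union, Finset.mem_inter]
  exact ⟨Or.inr ha.1, fun hh => ha.2 hh.1⟩

lemma sdiff_subset_symmdiff_left {α : Type*} [DecidableEq α] (A B : Finset α) :
    A \ B ⊆ (A ∪ B) \ (A ∩ B) := by
  intro a ha
  rw [Finset.mem_sdiff] at ha
  rw [Finset.mem_sdiff, Finset.mem_union, Finset.mem_inter]
  exact ⟨Or.inl ha.1, fun hh => ha.2 hh.2⟩

/-- The adjoint of any cluster system is a saturated patchwork. -/
lemma adj_satPW {α : Type*} [DecidableEq α] (C : Set (Finset α)) :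
    IsSatPW (adjS C) := by
  intro A hA B hB hAB
  rw [not_compat_iff] at hAB
  obtain ⟨hne, hAB1, hBA1⟩ := hAB
  have hABne : (A \ B).Nonempty := by
    rw [Finset.sdiff_nonempty]; exact hAB1
  have hBAne : (B \ A).Nonempty := by
    rw [Finset.sdiff_nonempty]; exact hBA1
  have key : ∀ E ∈ C, Compatible (A ∩ B) E ∧ Compatible (A ∪ B) E ∧
      Compatible (A \ B) E ∧ Compatible (B \ A) E ∧ Compatible ((A ∪ B) \ (A ∩ B)) E := by
    intro E hE
    have h1 := hA.2 E hE
    have h2 := hB.2 E hE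
    rw [compat_iff] at h1 h2
    have hd : ∀ {S T : Finset α}, S ∩ T = ∅ ↔ ∀ a, a ∈ S → a ∉ T := by
      intro S T
      constructor
      · intro h a ha hat
        have : a ∈ S ∩ T := Finset.mem_inter.2 ⟨ha, hat⟩
        simp [h] at this
      · intro h; ext a; simp only [Finset.mem_inter, Finset.notMem_empty, iff_false, not_and]
        exact fun ha => h a ha
    rcases h1 with h1 | h1 | h1 <;> rcases h2 with h2 | h2 | h2
    · -- A ∩ E = ∅, B ∩ E = ∅
      rw [hd] at h1 h2
      refine ⟨compat_of_disj ?_, compat_of_disj ?_, compat_of_disj ?_,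
        compat_of_disj ?_, compat_of_disj ?_⟩ <;>
      · rw [hd]; intro a ha
        simp only [Finset.mem_inter, Finset.mem_union, Finset.mem_sdiff] at ha
        first
        | exact h1 a ha.1
        | exact h2 a ha.1
        | exact ha.elim (h1 a) (h2 a)
        | exact ha.1.elim (h1 a) (h2 a)
    · -- A ∩ E = ∅, B ⊆ E
      exfalso
      obtain ⟨a, ha⟩ := hne
      rw [Finset.mem_inter] at ha
      have : a ∈ A ∩ E := Finset.mem_inter.2 ⟨ha.1, h2 ha.2⟩
      rw [h1] at this
      exact absurd this (Finset.notMem_empty a)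
    · -- A ∩ E = ∅, E ⊆ B : E ⊆ B \ A
      rw [hd] at h1
      have hEBA : E ⊆ B \ A := fun a ha => Finset.mem_sdiff.2 ⟨h2 ha, fun h' => h1 a h' ha⟩
      refine ⟨compat_of_disj ?_, compat_of_superset (h2.trans Finset.subset_union_right),
        compat_of_disj ?_, compat_of_superset hEBA,
        compat_of_superset (hEBA.trans (sdiff_subset_symmdiff_right A B))⟩
      · rw [hd]; intro a ha hae
        exact h1 a (Finset.mem_inter.1 ha).1 hae
      · rw [hd]; intro a ha hae
        exact h1 a (Finset.mem_sdiff.1 ha).1 hae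
    · -- A ⊆ E, B ∩ E = ∅ : symmetric impossible? no: E ⊆ A \ B case symmetric to above is E⊆A... 
      exfalso
      obtain ⟨a, ha⟩ := hne
      rw [Finset.mem_inter] at ha
      have : a ∈ B ∩ E := Finset.mem_inter.2 ⟨ha.2, h1 ha.1⟩
      rw [h2] at this
      exact absurd this (Finset.notMem_empty a)
    · -- A ⊆ E, B ⊆ E
      have h5 : A ∪ B ⊆ E := Finset.union_subset h1 h2
      exact ⟨compat_of_subset ((Finset.inter_subset_left).trans h1),
        compat_of_subset h5,
        compat_of_subset ((Finset.sdiff_subset).trans h1),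
        compat_of_subset ((Finset.sdiff_subset).trans h2),
        compat_of_subset ((Finset.sdiff_subset).trans h5)⟩
    · -- A ⊆ E, E ⊆ B : A ⊆ B contra
      exact absurd (h1.trans h2) hAB1
    · -- E ⊆ A, B ∩ E = ∅ : E ⊆ A \ B
      rw [hd] at h2
      have hEAB : E ⊆ A \ B := fun a ha => Finset.mem_sdiff.2 ⟨h1 ha, fun h' => h2 a h' ha⟩
      refine ⟨compat_of_disj ?_, compat_of_superset (h1.trans Finset.subset_union_left),
        compat_of_superset hEAB, compat_of_disj ?_,
        compat_of_superset (hEAB.trans (sdiff_subset_symmdiff_left A B))⟩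
      · rw [hd]; intro a ha hae
        exact h2 a (Finset.mem_inter.1 ha).2 hae
      · rw [hd]; intro a ha hae
        exact h2 a (Finset.mem_sdiff.1 ha).1 hae
    · -- E ⊆ A, B ⊆ E : B ⊆ A contra
      exact absurd (h2.trans h1) hBA1
    · -- E ⊆ A, E ⊆ B : E ⊆ A ∩ B
      have h6 : E ⊆ A ∩ B := fun a ha => Finset.mem_inter.2 ⟨h1 ha, h2 ha⟩
      refine ⟨compat_of_superset h6, compat_of_superset (h1.trans Finset.subset_union_left),
        compat_of_disj ?_, compat_of_disj ?_, compat_of_disj ?_⟩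
      · rw [hd]; intro a ha hae
        exact (Finset.mem_sdiff.1 ha).2 (h2 hae)
      · rw [hd]; intro a ha hae
        exact (Finset.mem_sdiff.1 ha).2 (h1 hae)
      · rw [hd]; intro a ha hae
        exact (Finset.mem_sdiff.1 ha).2 (Finset.mem_inter.2 ⟨h1 hae, h2 hae⟩)
  constructor
  · exact ⟨hne, fun E hE => (key E hE).1⟩
  constructor
  · exact ⟨hne.mono (Finset.inter_subset_left.trans Finset.subset_union_left),
      fun E hE => (key E hE).2.1⟩
  constructor
  · exact ⟨hABne, fun E hE => (key E hE).2.2.1⟩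
  constructor
  · exact ⟨hBAne, fun E hE => (key E hE).2.2.2.1⟩
  · exact ⟨hABne.mono (sdiff_subset_symmdiff_left A B), fun E hE => (key E hE).2.2.2.2⟩

/-- Union of two intersecting members of a saturated patchwork is a member. -/
lemma union2 {α : Type*} [DecidableEq α] {C : Set (Finset α)} (hS : IsSatPW C)
    {G G' : Finset α} (hG : G ∈ C) (hG' : G' ∈ C) (hne : (G ∩ G').Nonempty) :
    G ∪ G' ∈ C := by
  by_cases hc : Compatible G G'
  · rcases (compat_iff G G').1 hc with h | h | h
    · exact absurd h (Finset.nonempty_iff_ne_empty.1 hne)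
    · rwa [Finset.union_eq_right.2 h]
    · rwa [Finset.union_eq_left.2 h]
  · exact (hS G hG G' hG' hc).2.1

/-- Trace predicate: `P` is the trace on `A` of a member of `C` inside `N` crossing `A`. -/
def IsTr {α : Type*} [DecidableEq α] (C : Set (Finset α)) (A N P : Finset α) : Prop :=
  ∃ G ∈ C, ¬Compatible A G ∧ G ⊆ N ∧ A ∩ G = P

set_option maxHeartbeats 4000000 in
/-- Main lemma: for a saturated patchwork `C`, `C** ⊆ C ∪ C_triv`. -/
lemma key_aux {α : Type*} [Fintype α] [DecidableEq α] {C : Set (Finset α)}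
    (hCS : IsCS C) (hS : IsSatPW C) :
    ∀ (k : ℕ) (A : Finset α), (Finset.univ \ A).card ≤ k →
      A ∈ adjS (adjS C) → A ∉ CtrivS α → A ∈ C := by
  intro k
  induction k with
  | zero =>
    intro A hk hAcc hAtriv
    exfalso
    apply hAtriv
    right
    have h0 : (Finset.univ \ A) = ∅ := Finset.card_eq_zero.1 (Nat.le_zero.1 hk)
    have : Finset.univ ⊆ A := by
      intro a _
      by_contra ha
      have : a ∈ Finset.univ \ A := Finset.mem_sdiff.2 ⟨Finset.mem_univ a, ha⟩
      rw [h0] at this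
      exact Finset.notMem_empty a this
    exact Finset.univ_subset_iff.1 this
  | succ k IH =>
    intro A hk hAcc hAtriv
    by_contra hA
    classical
    have hAne : A.Nonempty := hAcc.1
    have hAnu : A ≠ Finset.univ := fun h => hAtriv (Or.inr h)
    have hAns : ∀ x : α, A ≠ {x} := fun x h => hAtriv (Or.inl ⟨x, h⟩)
    have hCsub : C ⊆ adjS (adjS C) := sub_adj_adj hCS
    have hCCsat : IsSatPW (adjS (adjS C)) := adj_satPW _
    -- the minimal superset N of A in C (or univ)
    obtain ⟨N, hNC, hAN, hNmin⟩ : ∃ N : Finset α, (N ∈ C ∨ N = Finset.univ) ∧ A ⊆ N ∧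
        (∀ G ∈ C, A ⊆ G → N ⊆ G) := by
      by_cases hup : ∃ G ∈ C, A ⊆ G
      · obtain ⟨N₀, hN₀mem, hN₀min⟩ := Finset.exists_min_image
          (Finset.univ.powerset.filter (fun G => G ∈ C ∧ A ⊆ G)) Finset.card
          (by
            obtain ⟨G, hG, hAG⟩ := hup
            exact ⟨G, Finset.mem_filter.2 ⟨Finset.mem_powerset.2 (Finset.subset_univ G), hG, hAG⟩⟩)
        obtain ⟨hN₀C, hAN₀⟩ := (Finset.mem_filter.1 hN₀mem).2
        refine ⟨N₀, Or.inl hN₀C, hAN₀, ?_⟩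
        intro G hG hAG
        have hmemG : G ∈ Finset.univ.powerset.filter (fun G => G ∈ C ∧ A ⊆ G) :=
          Finset.mem_filter.2 ⟨Finset.mem_powerset.2 (Finset.subset_univ G), hG, hAG⟩
        by_cases hcNG : Compatible N₀ G
        · rcases (compat_iff N₀ G).1 hcNG with h | h | h
          · exfalso
            obtain ⟨a, ha⟩ := hAne
            have : a ∈ N₀ ∩ G := Finset.mem_inter.2 ⟨hAN₀ ha, hAG ha⟩
            rw [h] at this
            exact Finset.notMem_empty a this
          · exact h
          · have := Finset.eq_of_subset_of_card_le h (hN₀min G hmemG)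
            rw [this]
        · have hI : N₀ ∩ G ∈ C := (hS N₀ hN₀C G hG hcNG).1
          have hmemI : N₀ ∩ G ∈ Finset.univ.powerset.filter (fun G => G ∈ C ∧ A ⊆ G) :=
            Finset.mem_filter.2 ⟨Finset.mem_powerset.2 (Finset.subset_univ _), hI,
              fun a ha => Finset.mem_inter.2 ⟨hAN₀ ha, hAG ha⟩⟩
          have := Finset.eq_of_subset_of_card_le Finset.inter_subset_left
            (hN₀min _ hmemI)
          exact Finset.inter_eq_left.1 this
      · exact ⟨Finset.univ, Or.inr rfl, Finset.subset_univ A,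
          fun G hG hAG => absurd ⟨G, hG, hAG⟩ hup⟩
    have hAneN : A ≠ N := by
      intro h
      rcases hNC with hN | hN
      · exact hA (h ▸ hN)
      · exact hAnu (h.trans hN)
    have hRne : (N \ A).Nonempty := by
      obtain ⟨a, ha, hna⟩ := Finset.exists_of_ssubset (lt_of_le_of_ne hAN hAneN)
      exact ⟨a, Finset.mem_sdiff.2 ⟨ha, hna⟩⟩
    have hRnA : ∀ a ∈ N \ A, a ∉ A := fun a ha => (Finset.mem_sdiff.1 ha).2
    have hRN : N \ A ⊆ N := Finset.sdiff_subset
    -- fact 2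
    have fact2 : ∀ G ∈ C, A ∩ G = ∅ → G ⊆ N ∨ G ∩ N = ∅ := by
      intro G hG hdisj
      by_cases h1 : G ⊆ N
      · exact Or.inl h1
      right
      by_contra hne0
      rw [← ne_eq, ← Finset.nonempty_iff_ne_empty] at hne0
      have hNmem : N ∈ C := by
        rcases hNC with h | h
        · exact h
        · exact absurd (h ▸ Finset.subset_univ G) h1
      have hNG : ¬Compatible N G := by
        rw [not_compat_iff]
        refine ⟨by rwa [Finset.inter_comm], ?_, h1⟩
        intro hNsub
        obtain ⟨a, ha⟩ := hAne
        have : a ∈ A ∩ G := Finset.mem_inter.2 ⟨ha, hNsub (hAN ha)⟩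
        rw [hdisj] at this
        exact Finset.notMem_empty a this
      have h5 : N \ G ∈ C := (hS N hNmem G hG hNG).2.2.1
      have hsubA : A ⊆ N \ G := by
        intro a ha
        refine Finset.mem_sdiff.2 ⟨hAN ha, fun hg => ?_⟩
        have : a ∈ A ∩ G := Finset.mem_inter.2 ⟨ha, hg⟩
        rw [hdisj] at this
        exact Finset.notMem_empty a this
      have hNsub := hNmin (N \ G) h5 hsubA
      obtain ⟨a, ha⟩ := hne0
      rw [Finset.mem_inter] at ha
      exact (Finset.mem_sdiff.1 (hNsub ha.2)).2 ha.1
    -- fact 4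
    have fact4 : ∀ G ∈ C, ¬Compatible A G → G ⊆ N → A ∪ G = N := by
      intro G hG hnc hGN
      have hUsubN : A ∪ G ⊆ N := Finset.union_subset hAN hGN
      have hU : A ∪ G ∈ adjS (adjS C) := (hCCsat A hAcc G (hCsub hG) hnc).2.1
      by_cases hUuniv : A ∪ G = Finset.univ
      · refine subset_antisymm hUsubN ?_
        rw [hUuniv]
        exact Finset.subset_univ N
      · have hUtriv : A ∪ G ∉ CtrivS α := by
          rintro (⟨y, hy⟩ | h)
          · have : A ⊆ {y} := hy ▸ Finset.subset_union_left
            rcases Finset.subset_singleton_iff.1 this with h' | h'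
            · exact hAne.ne_empty h'
            · exact hAns y h'
          · exact hUuniv h
        have hcard : (Finset.univ \ (A ∪ G)).card ≤ k := by
          have hss : Finset.univ \ (A ∪ G) ⊂ Finset.univ \ A := by
            refine Finset.ssubset_iff_of_subset
              (Finset.sdiff_subset_sdiff (le_refl _) Finset.subset_union_left) |>.2 ?_
            obtain ⟨g, hgG, hgA⟩ : ∃ g ∈ G, g ∉ A := by
              have := (not_compat_iff A G).1 hnc
              obtain ⟨a, ha⟩ := Finset.not_subset.1 this.2.2
              exact ⟨a, ha.1, ha.2⟩
            exact ⟨g, Finset.mem_sdiff.2 ⟨Finset.mem_univ g, hgA⟩,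
              fun hmem => (Finset.mem_sdiff.1 hmem).2 (Finset.mem_union_right A hgG)⟩
          have := Finset.card_lt_card hss
          omega
        have hUC := IH (A ∪ G) hcard hU hUtriv
        exact subset_antisymm hUsubN (hNmin (A ∪ G) hUC Finset.subset_union_left)
    -- generator equation
    have genEq : ∀ G ∈ C, ¬Compatible A G → G ⊆ N → G = (A ∩ G) ∪ (N \ A) := by
      intro G hG hnc hGN
      have h4 := fact4 G hG hnc hGN
      ext a
      simp only [Finset.mem_union, Finset.mem_inter, Finset.mem_sdiff]
      constructor
      · intro haG
        by_cases haA : a ∈ A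
        · exact Or.inl ⟨haA, haG⟩
        · exact Or.inr ⟨hGN haG, haA⟩
      · rintro (⟨-, h⟩ | ⟨hN', hA'⟩)
        · exact h
        · have : a ∈ A ∪ G := h4 ▸ hN'
          rcases Finset.mem_union.1 this with h' | h'
          · exact absurd h' hA'
          · exact h'
    -- trace consequences
    have trG : ∀ T, IsTr C A N T →
        T ∪ (N \ A) ∈ C ∧ ¬Compatible A (T ∪ (N \ A)) ∧ T ⊆ A ∧ T.Nonempty := by
      rintro T ⟨G, hG, hnc, hGN, rfl⟩
      have hge := genEq G hG hnc hGN
      rw [← hge]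
      refine ⟨hG, hnc, Finset.inter_subset_left, ((not_compat_iff A G).1 hnc).1⟩
    -- choose x together with the covering property HX
    obtain ⟨x, hxA, HX⟩ : ∃ x, x ∈ A ∧ ∀ T, IsTr C A N T →
        x ∈ T ∨ ∃ W ∈ C, W ⊆ A ∧ x ∈ W ∧ T ⊆ W := by
      by_cases hcr : ∃ G ∈ C, ¬Compatible A G
      · -- there is a crossing member; first produce some trace
        have hNCof : ∀ G : Finset α, ¬G ⊆ N → N ∈ C := by
          intro G hGN
          rcases hNC with h | h
          · exact h
          · exact absurd (h ▸ Finset.subset_univ G) hGN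
        have hNGof : ∀ G ∈ C, ¬Compatible A G → ¬G ⊆ N → ¬Compatible N G := by
          intro G hG hnc hGN
          obtain ⟨hne1, hne2, hne3⟩ := (not_compat_iff A G).1 hnc
          rw [not_compat_iff]
          refine ⟨hne1.mono (Finset.inter_subset_inter hAN (le_refl _)), ?_, hGN⟩
          intro hNsub
          exact hne2 (hAN.trans hNsub)
        have htr0 : ∃ P, IsTr C A N P := by
          obtain ⟨G₀, hG₀, hnc₀⟩ := hcr
          by_cases hGN : G₀ ⊆ N
          · exact ⟨A ∩ G₀, G₀, hG₀, hnc₀, hGN, rfl⟩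
          · have hNmem : N ∈ C := hNCof G₀ hGN
            have hNG : ¬Compatible N G₀ := hNGof G₀ hG₀ hnc₀ hGN
            obtain ⟨hnea, hneb, hnec⟩ := (not_compat_iff A G₀).1 hnc₀
            have h5 := hS N hNmem G₀ hG₀ hNG
            by_cases hLA : N ∩ G₀ ⊆ A
            · -- α-type: use N \ G₀
              refine ⟨A ∩ (N \ G₀), N \ G₀, h5.2.2.1, ?_, Finset.sdiff_subset, rfl⟩
              rw [not_compat_iff]
              refine ⟨?_, ?_, ?_⟩
              · obtain ⟨a, ha⟩ := Finset.not_subset.1 hneb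
                exact ⟨a, Finset.mem_inter.2 ⟨ha.1,
                  Finset.mem_sdiff.2 ⟨hAN ha.1, ha.2⟩⟩⟩
              · intro hsub
                obtain ⟨a, ha⟩ := hnea
                rw [Finset.mem_inter] at ha
                exact (Finset.mem_sdiff.1 (hsub ha.1)).2 ha.2
              · intro hsub
                obtain ⟨r, hr⟩ := hRne
                rw [Finset.mem_sdiff] at hr
                have hrG : r ∉ G₀ := fun h =>
                  hr.2 (hLA (Finset.mem_inter.2 ⟨hr.1, h⟩))
                exact hr.2 (hsub (Finset.mem_sdiff.2 ⟨hr.1, hrG⟩))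
            · -- β-type: use N ∩ G₀
              refine ⟨A ∩ (N ∩ G₀), N ∩ G₀, h5.1, ?_, Finset.inter_subset_left, rfl⟩
              rw [not_compat_iff]
              refine ⟨?_, ?_, hLA⟩
              · obtain ⟨a, ha⟩ := hnea
                rw [Finset.mem_inter] at ha
                exact ⟨a, Finset.mem_inter.2 ⟨ha.1,
                  Finset.mem_inter.2 ⟨hAN ha.1, ha.2⟩⟩⟩
              · intro hsub
                exact hneb (fun a ha => (Finset.mem_inter.1 (hsub ha)).2)
        -- minimal-cardinality trace M
        obtain ⟨M, hMmemF, hMmin⟩ := Finset.exists_min_image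
          (Finset.univ.powerset.filter (fun P => IsTr C A N P)) Finset.card
          (by
            obtain ⟨P, hP⟩ := htr0
            exact ⟨P, Finset.mem_filter.2 ⟨Finset.mem_powerset.2 (Finset.subset_univ P), hP⟩⟩)
        have hMtr : IsTr C A N M := (Finset.mem_filter.1 hMmemF).2
        have hMmin' : ∀ P, IsTr C A N P → M.card ≤ P.card := fun P hP =>
          hMmin P (Finset.mem_filter.2 ⟨Finset.mem_powerset.2 (Finset.subset_univ P), hP⟩)
        obtain ⟨hMC, hMnc, hMA, hMne⟩ := trG M hMtr
        obtain ⟨x, hxM⟩ := hMne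
        refine ⟨x, hMA hxM, ?_⟩
        intro T hT
        obtain ⟨hTC, hTnc, hTA, hTne⟩ := trG T hT
        have hdich : M ⊆ T ∨ M ∩ T = ∅ := by
          by_cases h1 : M ⊆ T
          · exact Or.inl h1
          right
          by_contra h2
          rw [← ne_eq, ← Finset.nonempty_iff_ne_empty] at h2
          have hcomp : (M ∪ (N \ A)) ∩ (T ∪ (N \ A)) = (M ∩ T) ∪ (N \ A) := by
            ext a
            simp only [Finset.mem_union, Finset.mem_inter, Finset.mem_sdiff]
            tauto
          have hncMT : ¬Compatible (M ∪ (N \ A)) (T ∪ (N \ A)) := by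
            rw [not_compat_iff]
            refine ⟨?_, ?_, ?_⟩
            · obtain ⟨r, hr⟩ := hRne
              exact ⟨r, Finset.mem_inter.2 ⟨Finset.mem_union_right M hr,
                Finset.mem_union_right T hr⟩⟩
            · intro hsub
              apply h1
              intro a ha
              rcases Finset.mem_union.1 (hsub (Finset.mem_union_left _ ha)) with h' | h'
              · exact h'
              · exact absurd (hMA ha) (hRnA a h')
            · intro hsub
              have hTM : T ⊆ M := by
                intro a ha
                rcases Finset.mem_union.1 (hsub (Finset.mem_union_left _ ha)) with h' | h'
                · exact h'
                · exact absurd (hTA ha) (hRnA a h')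
              have := Finset.eq_of_subset_of_card_le hTM (hMmin' T hT)
              exact h1 (this ▸ le_refl _)
          have hIC := (hS _ hMC _ hTC hncMT).1
          rw [hcomp] at hIC
          have htrMT : IsTr C A N (M ∩ T) := by
            refine ⟨(M ∩ T) ∪ (N \ A), hIC, ?_, ?_, ?_⟩
            · rw [not_compat_iff]
              refine ⟨?_, ?_, ?_⟩
              · obtain ⟨a, ha⟩ := h2
                rw [Finset.mem_inter] at ha
                exact ⟨a, Finset.mem_inter.2 ⟨hMA ha.1,
                  Finset.mem_union_left _ (Finset.mem_inter.2 ha)⟩⟩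
              · intro hsub
                have hAM : A ⊆ M := by
                  intro a ha
                  rcases Finset.mem_union.1 (hsub ha) with h' | h'
                  · exact Finset.inter_subset_left h'
                  · exact absurd ha (hRnA a h')
                have : A = M := subset_antisymm hAM hMA
                rw [not_compat_iff] at hMnc
                exact hMnc.2.1 (this ▸ Finset.subset_union_left)
              · intro hsub
                obtain ⟨r, hr⟩ := hRne
                exact hRnA r hr (hsub (Finset.mem_union_right _ hr))
            · exact Finset.union_subset ((Finset.inter_subset_left.trans hMA).trans hAN) hRN
            · ext a
              simp only [Finset.mem_inter, Finset.mem_union, Finset.mem_sdiff]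
              constructor
              · rintro ⟨haA, (h' | h')⟩
                · exact h'
                · exact absurd haA h'.2
              · intro h'
                exact ⟨hMA h'.1, Or.inl h'⟩
          have hle := hMmin' (M ∩ T) htrMT
          have := Finset.eq_of_subset_of_card_le Finset.inter_subset_left hle
          exact h1 (by rw [← this]; exact Finset.inter_subset_right)
        rcases hdich with h | h
        · exact Or.inl (h hxM)
        · -- disjoint: W := M ∪ T via symmetric difference
          have hncMT : ¬Compatible (M ∪ (N \ A)) (T ∪ (N \ A)) := by
            rw [not_compat_iff]
            refine ⟨?_, ?_, ?_⟩
            · obtain ⟨r, hr⟩ := hRne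
              exact ⟨r, Finset.mem_inter.2 ⟨Finset.mem_union_right M hr,
                Finset.mem_union_right T hr⟩⟩
            · intro hsub
              obtain ⟨a, ha⟩ : M.Nonempty := ⟨x, hxM⟩
              rcases Finset.mem_union.1 (hsub (Finset.mem_union_left _ ha)) with h' | h'
              · have : a ∈ M ∩ T := Finset.mem_inter.2 ⟨ha, h'⟩
                rw [h] at this
                exact Finset.notMem_empty a this
              · exact absurd (hMA ha) (hRnA a h')
            · intro hsub
              obtain ⟨a, ha⟩ := hTne
              rcases Finset.mem_union.1 (hsub (Finset.mem_union_left _ ha)) with h' | h'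
              · have : a ∈ M ∩ T := Finset.mem_inter.2 ⟨h', ha⟩
                rw [h] at this
                exact Finset.notMem_empty a this
              · exact absurd (hTA ha) (hRnA a h')
          have hsd := (hS _ hMC _ hTC hncMT).2.2.2.2
          have heq : ((M ∪ (N \ A)) ∪ (T ∪ (N \ A))) \
              ((M ∪ (N \ A)) ∩ (T ∪ (N \ A))) = M ∪ T := by
            ext a
            have h1 : a ∈ M → a ∉ N \ A := fun hm hr => hRnA a hr (hMA hm)
            have h2 : a ∈ T → a ∉ N \ A := fun ht hr => hRnA a hr (hTA ht)
            have h3 : a ∈ M → a ∈ T → False := fun hm ht => by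
              have : a ∈ M ∩ T := Finset.mem_inter.2 ⟨hm, ht⟩
              rw [h] at this
              exact Finset.notMem_empty a this
            simp only [Finset.mem_sdiff, Finset.mem_union, Finset.mem_inter]
            tauto
          rw [heq] at hsd
          exact Or.inr ⟨M ∪ T, hsd, Finset.union_subset hMA hTA,
            Finset.mem_union_left T hxM, Finset.subset_union_right⟩
      · -- no crossing member at all
        obtain ⟨x, hx⟩ := hAne
        refine ⟨x, hx, fun T hT => ?_⟩
        obtain ⟨G, hG, hnc, -, -⟩ := hT
        exact absurd ⟨G, hG, hnc⟩ hcr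
    -- the maximal member of C inside A containing x (or {x})
    obtain ⟨D, hDmemF, hDmaxF⟩ := Finset.exists_max_image
      (Finset.univ.powerset.filter
        (fun S => (S ∈ C ∧ x ∈ S ∧ S ⊆ A) ∨ S = {x})) Finset.card
      ⟨{x}, Finset.mem_filter.2 ⟨Finset.mem_powerset.2 (Finset.subset_univ _), Or.inr rfl⟩⟩
    have hDp : (D ∈ C ∧ x ∈ D ∧ D ⊆ A) ∨ D = {x} := (Finset.mem_filter.1 hDmemF).2
    have hDmax : ∀ S : Finset α, ((S ∈ C ∧ x ∈ S ∧ S ⊆ A) ∨ S = {x}) → S.card ≤ D.card :=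
      fun S hSp => hDmaxF S
        (Finset.mem_filter.2 ⟨Finset.mem_powerset.2 (Finset.subset_univ S), hSp⟩)
    have hxD : x ∈ D := by
      rcases hDp with ⟨-, h, -⟩ | h
      · exact h
      · rw [h]; exact Finset.mem_singleton_self x
    have hDA : D ⊆ A := by
      rcases hDp with ⟨-, -, h⟩ | h
      · exact h
      · rw [h]; exact Finset.singleton_subset_iff.2 hxA
    have hDneA : D ≠ A := by
      rcases hDp with ⟨hDC, -, -⟩ | h
      · exact fun he => hA (he ▸ hDC)
      · intro he
        exact hAns x (he.symm.trans h)
    -- absorption property of D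
    have absorb : ∀ W ∈ C, W ⊆ A → (W ∩ D).Nonempty → W ⊆ D := by
      intro W hW hWA hne
      rcases hDp with ⟨hDC, hxD', hDA'⟩ | hDx
      · have hu : W ∪ D ∈ C := union2 hS hW hDC hne
        have hle : (W ∪ D).card ≤ D.card :=
          hDmax (W ∪ D) (Or.inl ⟨hu, Finset.mem_union_right W hxD',
            Finset.union_subset hWA hDA'⟩)
        have := Finset.eq_of_subset_of_card_le Finset.subset_union_right hle
        rw [this]
        exact Finset.subset_union_left
      · obtain ⟨a, ha⟩ := hne
        rw [Finset.mem_inter, hDx, Finset.mem_singleton] at ha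
        have hxW : x ∈ W := ha.2 ▸ ha.1
        have hle : W.card ≤ D.card := hDmax W (Or.inl ⟨hW, hxW, hWA⟩)
        rw [hDx] at hle ⊢
        intro b hb
        rw [Finset.mem_singleton]
        exact Finset.card_le_one.1 (le_trans hle (by simp)) b hb x hxW
    -- R1: D is comparable with every trace
    have R1 : ∀ T : Finset α, IsTr C A N T → D ⊆ T ∨ T ⊆ D := by
      have R1' : ∀ (m : ℕ) (T : Finset α), T.card ≤ m → IsTr C A N T → D ⊆ T ∨ T ⊆ D := by
        intro m
        induction m with
        | zero =>
          intro T hTc htr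
          right
          rw [Nat.le_zero, Finset.card_eq_zero] at hTc
          rw [hTc]
          exact Finset.empty_subset D
        | succ m IHm =>
          intro T hTc htr
          rcases HX T htr with hxT | ⟨W, hWC, hWA, hxW, hTW⟩
          · by_cases hDT : D ⊆ T
            · exact Or.inl hDT
            right
            by_contra hTD
            have hDC : D ∈ C := by
              rcases hDp with ⟨h, -, -⟩ | h
              · exact h
              · exact absurd (h ▸ Finset.singleton_subset_iff.2 hxT) hDT
            obtain ⟨hTC, hTnc, hTA, hTne⟩ := trG T htr
            have hncTD : ¬Compatible (T ∪ (N \ A)) D := by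
              rw [not_compat_iff]
              refine ⟨⟨x, Finset.mem_inter.2 ⟨Finset.mem_union_left _ hxT, hxD⟩⟩, ?_, ?_⟩
              · intro hsub
                obtain ⟨r, hr⟩ := hRne
                exact hRnA r hr (hDA (hsub (Finset.mem_union_right T hr)))
              · intro hsub
                apply hDT
                intro a ha
                rcases Finset.mem_union.1 (hsub ha) with h' | h'
                · exact h'
                · exact absurd (hDA ha) (hRnA a h')
            have hsd : (T ∪ (N \ A)) \ D ∈ C := (hS _ hTC D hDC hncTD).2.2.1
            have heq : (T ∪ (N \ A)) \ D = (T \ D) ∪ (N \ A) := by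
              ext a
              have h1 : a ∈ N \ A → a ∉ D := fun hr hd => hRnA a hr (hDA hd)
              simp only [Finset.mem_sdiff, Finset.mem_union]
              tauto
            rw [heq] at hsd
            have hTDne : (T \ D).Nonempty := by
              obtain ⟨a, ha⟩ := Finset.not_subset.1 hTD
              exact ⟨a, Finset.mem_sdiff.2 ⟨ha.1, ha.2⟩⟩
            have htr' : IsTr C A N (T \ D) := by
              refine ⟨(T \ D) ∪ (N \ A), hsd, ?_, ?_, ?_⟩
              · rw [not_compat_iff]
                refine ⟨?_, ?_, ?_⟩
                · obtain ⟨a, ha⟩ := hTDne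
                  exact ⟨a, Finset.mem_inter.2 ⟨hTA (Finset.mem_sdiff.1 ha).1,
                    Finset.mem_union_left _ ha⟩⟩
                · intro hsub
                  rcases Finset.mem_union.1 (hsub hxA) with h' | h'
                  · exact (Finset.mem_sdiff.1 h').2 hxD
                  · exact hRnA x h' hxA
                · intro hsub
                  obtain ⟨r, hr⟩ := hRne
                  exact hRnA r hr (hsub (Finset.mem_union_right _ hr))
              · exact Finset.union_subset ((Finset.sdiff_subset.trans hTA).trans hAN) hRN
              · ext a
                simp only [Finset.mem_inter, Finset.mem_union, Finset.mem_sdiff]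
                constructor
                · rintro ⟨haA, (h' | h')⟩
                  · exact h'
                  · exact absurd haA h'.2
                · intro h'
                  exact ⟨hTA h'.1, Or.inl h'⟩
            have hcard : (T \ D).card ≤ m := by
              have hss : T \ D ⊂ T := by
                refine Finset.ssubset_iff_of_subset Finset.sdiff_subset |>.2 ?_
                exact ⟨x, hxT, fun hmem => (Finset.mem_sdiff.1 hmem).2 hxD⟩
              have := Finset.card_lt_card hss
              omega
            rcases IHm (T \ D) hcard htr' with h' | h'
            · exact absurd (Finset.mem_sdiff.1 (h' hxD)).2 (fun _ => (Finset.mem_sdiff.1 (h' hxD)).2 hxD)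
            · obtain ⟨a, ha⟩ := hTDne
              exact absurd (h' ha) (Finset.mem_sdiff.1 ha).2
          · right
            exact hTW.trans (absorb W hWC hWA ⟨x, Finset.mem_inter.2 ⟨hxW, hxD⟩⟩)
      exact fun T hT => R1' T.card T (le_refl _) hT
    -- the witness B = D ∪ (N \ A)
    have hBadj : D ∪ (N \ A) ∈ adjS C := by
      refine ⟨⟨x, Finset.mem_union_left _ hxD⟩, ?_⟩
      intro G hG
      by_cases hcG : Compatible A G
      · rcases (compat_iff A G).1 hcG with hdis | hsub | hsup
        · -- A ∩ G = ∅
          rcases fact2 G hG hdis with h | h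
          · -- G ⊆ N, so G ⊆ N \ A ⊆ B
            refine compat_of_superset ?_
            intro a ha
            refine Finset.mem_union_right D (Finset.mem_sdiff.2 ⟨h ha, fun haA => ?_⟩)
            have : a ∈ A ∩ G := Finset.mem_inter.2 ⟨haA, ha⟩
            rw [hdis] at this
            exact Finset.notMem_empty a this
          · -- G ∩ N = ∅
            refine compat_of_disj ?_
            ext a
            simp only [Finset.mem_inter, Finset.mem_union, Finset.notMem_empty, iff_false,
              not_and]
            rintro (haD | haR) haG
            · have : a ∈ G ∩ N := Finset.mem_inter.2 ⟨haG, hAN (hDA haD)⟩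
              rw [h] at this
              exact Finset.notMem_empty a this
            · have : a ∈ G ∩ N := Finset.mem_inter.2 ⟨haG, (Finset.mem_sdiff.1 haR).1⟩
              rw [h] at this
              exact Finset.notMem_empty a this
        · -- A ⊆ G
          have hGA : G ≠ A := fun h => hA (h ▸ hG)
          have hNG : N ⊆ G := hNmin G hG hsub
          exact compat_of_subset
            (Finset.union_subset ((hDA.trans hAN).trans hNG) (hRN.trans hNG))
        · -- G ⊆ A
          by_cases hint : (G ∩ D).Nonempty
          · exact compat_of_superset ((absorb G hG hsup hint).trans Finset.subset_union_left)
          · refine compat_of_disj ?_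
            rw [Finset.not_nonempty_iff_eq_empty] at hint
            ext a
            simp only [Finset.mem_inter, Finset.mem_union, Finset.notMem_empty, iff_false,
              not_and]
            rintro (haD | haR) haG
            · have : a ∈ G ∩ D := Finset.mem_inter.2 ⟨haG, haD⟩
              rw [hint] at this
              exact Finset.notMem_empty a this
            · exact hRnA a haR (hsup haG)
      · -- G crosses A
        obtain ⟨hne1, hne2, hne3⟩ := (not_compat_iff A G).1 hcG
        by_cases hGsN : G ⊆ N
        · -- G = (A ∩ G) ∪ (N \ A)
          have hge := genEq G hG hcG hGsN
          have htrP : IsTr C A N (A ∩ G) := ⟨G, hG, hcG, hGsN, rfl⟩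
          rcases R1 (A ∩ G) htrP with h | h
          · refine compat_of_subset ?_
            rw [hge]
            exact Finset.union_subset (h.trans Finset.subset_union_left)
              Finset.subset_union_right
          · refine compat_of_superset ?_
            rw [hge]
            exact Finset.union_subset (h.trans Finset.subset_union_left)
              Finset.subset_union_right
        · -- G not inside N
          have hNmem : N ∈ C := by
            rcases hNC with h | h
            · exact h
            · exact absurd (h ▸ Finset.subset_univ G) hGsN
          have hNG : ¬Compatible N G := by
            rw [not_compat_iff]
            refine ⟨hne1.mono (Finset.inter_subset_inter hAN (le_refl _)), ?_, hGsN⟩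
            intro hNsub
            exact hne2 (hAN.trans hNsub)
          have h5 := hS N hNmem G hG hNG
          by_cases hLA : N ∩ G ⊆ A
          · -- α-type: show B ∩ G = ∅
            have htrL : IsTr C A N (A ∩ (N \ G)) := by
              refine ⟨N \ G, h5.2.2.1, ?_, Finset.sdiff_subset, rfl⟩
              rw [not_compat_iff]
              refine ⟨?_, ?_, ?_⟩
              · obtain ⟨a, ha⟩ := Finset.not_subset.1 hne2
                exact ⟨a, Finset.mem_inter.2 ⟨ha.1, Finset.mem_sdiff.2 ⟨hAN ha.1, ha.2⟩⟩⟩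
              · intro hsubx
                obtain ⟨a, ha⟩ := hne1
                rw [Finset.mem_inter] at ha
                exact (Finset.mem_sdiff.1 (hsubx ha.1)).2 ha.2
              · intro hsubx
                obtain ⟨r, hr⟩ := hRne
                rw [Finset.mem_sdiff] at hr
                have hrG : r ∉ G := fun hh => hr.2 (hLA (Finset.mem_inter.2 ⟨hr.1, hh⟩))
                exact hr.2 (hsubx (Finset.mem_sdiff.2 ⟨hr.1, hrG⟩))
            have hDdisjG : ∀ a ∈ D, a ∉ G := by
              rcases R1 (A ∩ (N \ G)) htrL with h | h
              · intro a haD haG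
                have := h haD
                rw [Finset.mem_inter, Finset.mem_sdiff] at this
                exact this.2.2 haG
              · intro a haD haG
                by_cases hint : ((N ∩ G) ∩ D).Nonempty
                · -- then A ⊆ D, contradiction
                  have hLD : N ∩ G ⊆ D := absorb (N ∩ G) h5.1 hLA hint
                  have hAD : A ⊆ D := by
                    intro b hb
                    by_cases hbG : b ∈ G
                    · exact hLD (Finset.mem_inter.2 ⟨hAN hb, hbG⟩)
                    · exact h (Finset.mem_inter.2 ⟨hb, Finset.mem_sdiff.2 ⟨hAN hb, hbG⟩⟩)
                  exact hDneA (subset_antisymm hDA hAD)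
                · exact hint ⟨a, Finset.mem_inter.2 ⟨Finset.mem_inter.2
                    ⟨hAN (hDA haD), haG⟩, haD⟩⟩
            refine compat_of_disj ?_
            ext a
            simp only [Finset.mem_inter, Finset.mem_union, Finset.notMem_empty, iff_false,
              not_and]
            rintro (haD | haR) haG
            · exact hDdisjG a haD haG
            · have : a ∈ N ∩ G := Finset.mem_inter.2 ⟨(Finset.mem_sdiff.1 haR).1, haG⟩
              exact (Finset.mem_sdiff.1 haR).2 (hLA this)
          · -- β-type: show B ⊆ G
            have hncL : ¬Compatible A (N ∩ G) := by
              rw [not_compat_iff]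
              refine ⟨?_, ?_, hLA⟩
              · obtain ⟨a, ha⟩ := hne1
                rw [Finset.mem_inter] at ha
                exact ⟨a, Finset.mem_inter.2 ⟨ha.1, Finset.mem_inter.2 ⟨hAN ha.1, ha.2⟩⟩⟩
              · intro hsubx
                exact hne2 (fun a ha => (Finset.mem_inter.1 (hsubx ha)).2)
            have htrP : IsTr C A N (A ∩ (N ∩ G)) := ⟨N ∩ G, h5.1, hncL,
              Finset.inter_subset_left, rfl⟩
            have hgen := genEq (N ∩ G) h5.1 hncL Finset.inter_subset_left
            -- A \ G = N \ G ∈ C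
            have hRL : N \ A ⊆ N ∩ G := by
              rw [hgen]
              exact Finset.subset_union_right
            have hNGeq : N \ G = A \ G := by
              ext a
              simp only [Finset.mem_sdiff]
              constructor
              · rintro ⟨haN, haG⟩
                by_cases haA : a ∈ A
                · exact ⟨haA, haG⟩
                · exact absurd (Finset.mem_inter.1 (hRL (Finset.mem_sdiff.2 ⟨haN, haA⟩))).2 haG
              · rintro ⟨haA, haG⟩
                exact ⟨hAN haA, haG⟩
            have hAdG : A \ G ∈ C := hNGeq ▸ h5.2.2.1
            have hDP : D ⊆ A ∩ G := by
              by_cases hint : ((A \ G) ∩ D).Nonempty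
              · exfalso
                have habs : A \ G ⊆ D := absorb (A \ G) hAdG Finset.sdiff_subset hint
                rcases R1 (A ∩ (N ∩ G)) htrP with h | h
                · obtain ⟨a, ha⟩ := hint
                  rw [Finset.mem_inter] at ha
                  have := h ha.2
                  rw [Finset.mem_inter, Finset.mem_inter] at this
                  exact (Finset.mem_sdiff.1 ha.1).2 this.2.2
                · have hAD : A ⊆ D := by
                    intro b hb
                    by_cases hbG : b ∈ G
                    · exact h (Finset.mem_inter.2 ⟨hb, Finset.mem_inter.2 ⟨hAN hb, hbG⟩⟩)
                    · exact habs (Finset.mem_sdiff.2 ⟨hb, hbG⟩)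
                  exact hDneA (subset_antisymm hDA hAD)
              · intro a haD
                refine Finset.mem_inter.2 ⟨hDA haD, ?_⟩
                by_contra haG
                exact hint ⟨a, Finset.mem_inter.2 ⟨Finset.mem_sdiff.2 ⟨hDA haD, haG⟩, haD⟩⟩
            refine compat_of_subset ?_
            refine Finset.union_subset (hDP.trans Finset.inter_subset_right) ?_
            exact hRL.trans Finset.inter_subset_right
    -- final contradiction
    have hcompat := hAcc.2 _ hBadj
    rcases hcompat with h | h | h
    · have : x ∈ A ∩ (D ∪ (N \ A)) := Finset.mem_inter.2 ⟨hxA, Finset.mem_union_left _ hxD⟩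
      rw [h] at this
      exact Finset.notMem_empty x this
    · -- A ∩ B = A, i.e. A ⊆ B; but A ∩ B = D
      have hABD : A ∩ (D ∪ (N \ A)) = D := by
        ext a
        simp only [Finset.mem_inter, Finset.mem_union, Finset.mem_sdiff]
        constructor
        · rintro ⟨haA, (h' | h')⟩
          · exact h'
          · exact absurd haA h'.2
        · intro h'
          exact ⟨hDA h', Or.inl h'⟩
      rw [hABD] at h
      exact hDneA h
    · -- A ∩ B = B, i.e. B ⊆ A
      obtain ⟨r, hr⟩ := hRne
      have : r ∈ A ∩ (D ∪ (N \ A)) := by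
        rw [h]
        exact Finset.mem_union_right D hr
      exact hRnA r hr (Finset.mem_inter.1 this).1

/-- A cluster system `C` satisfies `C = C**` iff it is a saturated patchwork containing
`C_triv`; moreover `C** = C ∪ C_triv` for every saturated patchwork, `H** = H ∪ C_triv`
for every hierarchy, and `H** = H` for a hierarchy `H` iff `C_triv ⊆ H`. -/
theorem stmt13 {α : Type*} [Fintype α] [DecidableEq α] (hcard : 2 ≤ Fintype.card α) :
    (∀ C : Set (Finset α), IsCS C →
      (C = adjS (adjS C) ↔ IsSatPW C ∧ CtrivS α ⊆ C)) ∧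
    (∀ C : Set (Finset α), IsCS C → IsSatPW C →
      adjS (adjS C) = C ∪ CtrivS α) ∧
    (∀ H : Set (Finset α), IsHierarchyS H →
      adjS (adjS H) = H ∪ CtrivS α) ∧
    (∀ H : Set (Finset α), IsHierarchyS H →
      (adjS (adjS H) = H ↔ CtrivS α ⊆ H)) := by
  haveI hNe : Nonempty α := Fintype.card_pos_iff.1 (by omega)
  have key : ∀ C : Set (Finset α), IsCS C → IsSatPW C → adjS (adjS C) = C ∪ CtrivS α := by
    intro C hCS hSat
    apply Set.Subset.antisymm
    · intro A hA
      by_cases hT : A ∈ CtrivS α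
      · exact Or.inr hT
      · exact Or.inl (key_aux hCS hSat (Finset.univ \ A).card A (le_refl _) hA hT)
    · rintro A (hA | hA)
      · exact sub_adj_adj hCS hA
      · exact triv_sub_adjS _ hA
  have hierSat : ∀ H : Set (Finset α), IsHierarchyS H → IsSatPW H := by
    intro H hH A hA B hB hAB
    exact absurd (hH.2 A hA B hB) hAB
  refine ⟨?_, fun C hCS hSat => key C hCS hSat, ?_, ?_⟩
  · intro C hCS
    constructor
    · intro h
      constructor
      · rw [h]; exact adj_satPW _
      · rw [h]; exact triv_sub_adjS _
    · rintro ⟨hSat, htriv⟩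
      rw [key C hCS hSat]
      exact (Set.union_eq_self_of_subset_right htriv).symm
  · intro H hH
    exact key H hH.1 (hierSat H hH)
  · intro H hH
    have h3 := key H hH.1 (hierSat H hH)
    constructor
    · intro h
      rw [← h, h3]
      exact Set.subset_union_right
    · intro h
      rw [h3]
      exact Set.union_eq_self_of_subset_right h
end
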